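/- Let α1, α2, α3 ∈ ℂ. For every γ ∈ ℝ with |γ| ≥ |α1|, and writing K_ξ = r cos θ, K_η = r sin θ, the dispersion relation (r²/2 · sin(2θ) + |α2|² − |α3|²)² = r²(γ² − |α1|²) − ψ, where ψ = γ⁴ − 2γ² Σ_{j=1}^3 |α_j|² + 4γ(Re(conj(α1)α2α3 + α1 conj(α2) α3)) + |α1|⁴ − 2|α1|² Re(α3²) − 2 Re(conj(α1)² α2²), has a real solution θ ∈ (−π, π] for all sufficiently large r > 0. Conversely, for |γ| < |α1| no real solution θ exists for large r. -/

import Mathlib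

/-- The quantity `ψ` in the large-`r` asymptotics of the four-mode dispersion
relation. -/
noncomputable def psi4 (α1 α2 α3 : ℂ) (γ : ℝ) : ℝ :=
  γ ^ 4 - 2 * γ ^ 2 * (‖α1‖ ^ 2 + ‖α2‖ ^ 2 + ‖α3‖ ^ 2)
    + 4 * γ * (((starRingEnd ℂ) α1 * α2 * α3 + α1 * (starRingEnd ℂ) α2 * α3).re)
    + ‖α1‖ ^ 4 - 2 * ‖α1‖ ^ 2 * ((α3 ^ 2).re)
    - 2 * ((((starRingEnd ℂ) α1) ^ 2 * α2 ^ 2).re)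

private lemma exists_theta (r B2 B3 E : ℝ) (hr : 0 < r) (hE : 0 ≤ E)
    (h1 : -(r ^ 2) ≤ 2 * ((B3 - B2) + Real.sqrt E))
    (h2 : 2 * ((B3 - B2) + Real.sqrt E) ≤ r ^ 2) :
    ∃ θ ∈ Set.Ioc (-Real.pi) Real.pi,
      (r ^ 2 / 2 * Real.sin (2 * θ) + B2 - B3) ^ 2 = E := by
  have hr2 : (0:ℝ) < r ^ 2 := by positivity
  set s : ℝ := 2 * ((B3 - B2) + Real.sqrt E) / r ^ 2 with hs
  have hs1 : -1 ≤ s := by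
    rw [hs, le_div_iff₀ hr2]; linarith
  have hs2 : s ≤ 1 := by
    rw [hs, div_le_one hr2]; linarith
  refine ⟨Real.arcsin s / 2, ⟨?_, ?_⟩, ?_⟩
  · have := Real.neg_pi_div_two_le_arcsin s
    have := Real.pi_pos
    linarith
  · have := Real.arcsin_le_pi_div_two s
    have := Real.pi_pos
    linarith
  · have hsin : Real.sin (2 * (Real.arcsin s / 2)) = s := by
      rw [show 2 * (Real.arcsin s / 2) = Real.arcsin s by ring, Real.sin_arcsin hs1 hs2]
    rw [hsin]
    have : r ^ 2 / 2 * s + B2 - B3 = Real.sqrt E := by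
      rw [hs]; field_simp; ring
    rw [this, Real.sq_sqrt hE]

/-- Case `c = 0`, `ψ ≤ 0`: bounds needed to invoke `exists_theta`. -/
private lemma bounds_zero (ψ A : ℝ) (hψ : ψ ≤ 0) :
    ∃ R : ℝ, 0 ≤ R ∧ ∀ r : ℝ, R < r → 0 < r ∧ 0 ≤ r ^ 2 * 0 - ψ ∧
      -(r ^ 2) ≤ 2 * (A + Real.sqrt (r ^ 2 * 0 - ψ)) ∧
      2 * (A + Real.sqrt (r ^ 2 * 0 - ψ)) ≤ r ^ 2 := by
  refine ⟨2 * |A| + 2 * Real.sqrt (-ψ) + 1, by positivity, ?_⟩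
  intro r hr
  have hR1 : (1:ℝ) ≤ 2 * |A| + 2 * Real.sqrt (-ψ) + 1 := by
    linarith [abs_nonneg A, Real.sqrt_nonneg (-ψ)]
  have hr1 : (1:ℝ) < r := lt_of_le_of_lt hR1 hr
  have hr0 : (0:ℝ) < r := by linarith
  have hEeq : r ^ 2 * 0 - ψ = -ψ := by ring
  have hRsq : 2 * |A| + 2 * Real.sqrt (-ψ) + 1 < r ^ 2 := by
    nlinarith [abs_nonneg A, Real.sqrt_nonneg (-ψ)]
  rw [hEeq]
  have hs := Real.sqrt_nonneg (-ψ)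
  refine ⟨hr0, by linarith, ?_, ?_⟩
  · have := neg_abs_le A
    linarith
  · have := le_abs_self A
    linarith

/-- Case `c > 0`: bounds needed to invoke `exists_theta`. -/
private lemma bounds_pos (c ψ A : ℝ) (hcz : 0 < c) :
    ∃ R : ℝ, 0 ≤ R ∧ ∀ r : ℝ, R < r → 0 < r ∧ 0 ≤ r ^ 2 * c - ψ ∧
      -(r ^ 2) ≤ 2 * (A + Real.sqrt (r ^ 2 * c - ψ)) ∧
      2 * (A + Real.sqrt (r ^ 2 * c - ψ)) ≤ r ^ 2 := by
  refine ⟨Real.sqrt (|ψ| / c) + 2 * Real.sqrt c + 2 * |A| + 2 * Real.sqrt |ψ| + 1,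
    by positivity, ?_⟩
  intro r hr
  have hsq1 : (0:ℝ) ≤ Real.sqrt (|ψ| / c) := Real.sqrt_nonneg _
  have hsq2 : (0:ℝ) ≤ Real.sqrt c := Real.sqrt_nonneg _
  have hsq3 : (0:ℝ) ≤ Real.sqrt |ψ| := Real.sqrt_nonneg _
  have hA0 : (0:ℝ) ≤ |A| := abs_nonneg A
  have hr1 : (1:ℝ) < r := by linarith
  have hr0 : (0:ℝ) < r := by linarith
  have hE : 0 ≤ r ^ 2 * c - ψ := by
    have h1 : Real.sqrt (|ψ| / c) < r := by linarith
    have h2 : Real.sqrt (|ψ| / c) ^ 2 = |ψ| / c :=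
      Real.sq_sqrt (div_nonneg (abs_nonneg ψ) hcz.le)
    have h3 : |ψ| / c < r ^ 2 := by nlinarith
    have h4 : |ψ| < r ^ 2 * c := (div_lt_iff₀ hcz).mp h3
    have := le_abs_self ψ
    linarith
  have hsc : Real.sqrt c ^ 2 = c := Real.sq_sqrt hcz.le
  have hsψ : Real.sqrt |ψ| ^ 2 = |ψ| := Real.sq_sqrt (abs_nonneg ψ)
  have hsqrtE : Real.sqrt (r ^ 2 * c - ψ) ≤ r * Real.sqrt c + Real.sqrt |ψ| := by
    have hle : r ^ 2 * c - ψ ≤ (r * Real.sqrt c + Real.sqrt |ψ|) ^ 2 := by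
      nlinarith [neg_abs_le ψ, mul_nonneg (mul_nonneg hr0.le hsq2) hsq3]
    calc Real.sqrt (r ^ 2 * c - ψ) ≤ Real.sqrt ((r * Real.sqrt c + Real.sqrt |ψ|) ^ 2) :=
          Real.sqrt_le_sqrt hle
      _ = r * Real.sqrt c + Real.sqrt |ψ| := Real.sqrt_sq (by positivity)
  have hbig : 2 * Real.sqrt c + 2 * |A| + 2 * Real.sqrt |ψ| + 1 ≤ r := by linarith
  have hmul : r * (2 * Real.sqrt c + 2 * |A| + 2 * Real.sqrt |ψ| + 1) ≤ r * r :=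
    mul_le_mul_of_nonneg_left hbig hr0.le
  have hfA : 0 ≤ (r - 1) * |A| := mul_nonneg (by linarith) hA0
  have hfψ : 0 ≤ (r - 1) * Real.sqrt |ψ| := mul_nonneg (by linarith) hsq3
  have hkey : 2 * |A| + 2 * (r * Real.sqrt c) + 2 * Real.sqrt |ψ| ≤ r ^ 2 := by
    nlinarith
  have hEs := Real.sqrt_nonneg (r ^ 2 * c - ψ)
  refine ⟨hr0, hE, ?_, ?_⟩
  · have := neg_abs_le A
    linarith
  · have := le_abs_self A
    linarith

/-- Case `c < 0`: the right-hand side is eventually negative. -/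
private lemma rhs_neg (c ψ : ℝ) (hc : c < 0) :
    ∃ R : ℝ, 0 ≤ R ∧ ∀ r : ℝ, R < r → r ^ 2 * c - ψ < 0 := by
  refine ⟨Real.sqrt (|ψ| / (-c)), Real.sqrt_nonneg _, ?_⟩
  intro r hr
  have h2 : Real.sqrt (|ψ| / (-c)) ^ 2 = |ψ| / (-c) :=
    Real.sq_sqrt (div_nonneg (abs_nonneg ψ) (by linarith))
  have h3 : |ψ| / (-c) < r ^ 2 := by
    nlinarith [Real.sqrt_nonneg (|ψ| / (-c))]
  have h4 : |ψ| < r ^ 2 * (-c) := (div_lt_iff₀ (by linarith)).mp h3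
  have := neg_le_abs ψ
  nlinarith

/-- for `|γ| ≥ |α1|` the equation
`(r²/2 sin(2θ) + |α2|² − |α3|²)² = r²(γ² − |α1|²) − ψ` has a solution
`θ ∈ (−π, π]` for all sufficiently large `r > 0`; for `|γ| < |α1|` no real
solution `θ` exists for large `r`. -/
theorem stmt8 (α1 α2 α3 : ℂ) (γ : ℝ) :
    (|γ| ≥ ‖α1‖ → ∃ R : ℝ, 0 ≤ R ∧ ∀ r : ℝ, R < r →
      ∃ θ ∈ Set.Ioc (-Real.pi) Real.pi,
        (r ^ 2 / 2 * Real.sin (2 * θ) + ‖α2‖ ^ 2 - ‖α3‖ ^ 2) ^ 2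
          = r ^ 2 * (γ ^ 2 - ‖α1‖ ^ 2) - psi4 α1 α2 α3 γ) ∧
    (|γ| < ‖α1‖ → ∃ R : ℝ, 0 ≤ R ∧ ∀ r : ℝ, R < r → ∀ θ : ℝ,
        (r ^ 2 / 2 * Real.sin (2 * θ) + ‖α2‖ ^ 2 - ‖α3‖ ^ 2) ^ 2
          ≠ r ^ 2 * (γ ^ 2 - ‖α1‖ ^ 2) - psi4 α1 α2 α3 γ) := by
  set c : ℝ := γ ^ 2 - ‖α1‖ ^ 2 with hcdef
  set ψ : ℝ := psi4 α1 α2 α3 γ with hψdef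
  have habs1 : ‖α1‖ ^ 2 = α1.re ^ 2 + α1.im ^ 2 := by
    rw [Complex.sq_norm, Complex.normSq_apply]; ring
  have habs2 : ‖α2‖ ^ 2 = α2.re ^ 2 + α2.im ^ 2 := by
    rw [Complex.sq_norm, Complex.normSq_apply]; ring
  have habs3 : ‖α3‖ ^ 2 = α3.re ^ 2 + α3.im ^ 2 := by
    rw [Complex.sq_norm, Complex.normSq_apply]; ring
  have habs1' : ‖α1‖ ^ 4 = (α1.re ^ 2 + α1.im ^ 2) ^ 2 := by
    rw [show (4:ℕ) = 2 * 2 from rfl, pow_mul, habs1]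
  have hψeq : ψ = c ^ 2
      - 2 * c * ((α2.re ^ 2 + α2.im ^ 2) + (α3.re ^ 2 + α3.im ^ 2))
      - 4 * ((α1.re ^ 2 + α1.im ^ 2) * α3.re ^ 2
        - 2 * γ * (α1.re * α2.re + α1.im * α2.im) * α3.re
        + (α1.re * α2.re + α1.im * α2.im) ^ 2) := by
    rw [hψdef, hcdef]
    unfold psi4
    rw [habs1, habs2, habs3, habs1']
    simp only [Complex.add_re, Complex.mul_re, Complex.mul_im, Complex.conj_re,
      Complex.conj_im, pow_two]
    ring
  have hcc : c = γ ^ 2 - (α1.re ^ 2 + α1.im ^ 2) := by rw [hcdef, habs1]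
  constructor
  · -- existence direction
    intro hge
    have hc0 : 0 ≤ c := by
      have h1 : γ ^ 2 = |γ| ^ 2 := (sq_abs γ).symm
      have h2 : (0:ℝ) ≤ ‖α1‖ := norm_nonneg α1
      rw [hcdef]
      nlinarith
    rcases eq_or_lt_of_le hc0 with hcz | hcz
    · -- c = 0 case
      have hγsq : γ ^ 2 = α1.re ^ 2 + α1.im ^ 2 := by
        rw [← hcz] at hcc; linarith
      have hψ0 : ψ ≤ 0 := by
        rw [← hcz] at hψeq
        nlinarith [sq_nonneg (γ * α3.re - (α1.re * α2.re + α1.im * α2.im)),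
          sq_nonneg α3.re]
      obtain ⟨R, hR0, hR⟩ :=
        bounds_zero ψ (‖α3‖ ^ 2 - ‖α2‖ ^ 2) hψ0
      refine ⟨R, hR0, ?_⟩
      intro r hr
      obtain ⟨hr0, hE, hb1, hb2⟩ := hR r hr
      rw [← hcz]
      exact exists_theta r (‖α2‖ ^ 2) (‖α3‖ ^ 2)
        (r ^ 2 * 0 - ψ) hr0 hE hb1 hb2
    · -- c > 0 case
      obtain ⟨R, hR0, hR⟩ :=
        bounds_pos c ψ (‖α3‖ ^ 2 - ‖α2‖ ^ 2) hcz
      refine ⟨R, hR0, ?_⟩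
      intro r hr
      obtain ⟨hr0, hE, hb1, hb2⟩ := hR r hr
      exact exists_theta r (‖α2‖ ^ 2) (‖α3‖ ^ 2)
        (r ^ 2 * c - ψ) hr0 hE hb1 hb2
  · -- nonexistence direction
    intro hlt
    have hc0 : c < 0 := by
      have h1 : γ ^ 2 = |γ| ^ 2 := (sq_abs γ).symm
      have h2 : (0:ℝ) ≤ |γ| := abs_nonneg γ
      rw [hcdef]
      nlinarith
    obtain ⟨R, hR0, hR⟩ := rhs_neg c ψ hc0
    refine ⟨R, hR0, ?_⟩
    intro r hr θ heq
    have h5 := hR r hr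
    have := sq_nonneg (r ^ 2 / 2 * Real.sin (2 * θ) + ‖α2‖ ^ 2
      - ‖α3‖ ^ 2)
    linarith [heq ▸ this]
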